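/- arXiv:1208.6316 — 2 statements merged into one kernel-verified Lean document; each statement's English description precedes it below -/
import Mathlib

section
/- For all N ≥ 0, the sum over j ≥ 0 of q^{j^2} times the Gaussian binomial coefficient [N-j choose j]_q equals the sum over all integers λ of (-1)^λ q^{λ(5λ+1)/2} times [N choose ⌊(N-5λ)/2⌋]_q. -/
open Complex

noncomputable def qp (q x : ℂ) (n : ℕ) : ℂ := ∏ i ∈ Finset.range n, (1 - q ^ i * x)

noncomputable def qpi (q x : ℂ) : ℂ := ∏' i : ℕ, (1 - q ^ i * x)

noncomputable def jj (q z : ℂ) : ℂ := qpi q z * qpi q (q / z) * qpi q q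

noncomputable def mAL (x q z : ℂ) : ℂ :=
  (jj q z)⁻¹ * ∑' r : ℤ, (-1 : ℂ) ^ r * q ^ (r * (r - 1) / 2) * z ^ r / (1 - q ^ (r - 1) * x * z)

noncomputable def gUniv (x q : ℂ) : ℂ :=
  x⁻¹ * (-1 + ∑' n : ℕ, q ^ (n ^ 2) / (qp q x (n + 1) * qp q (q / x) n))

noncomputable def qpz (q x : ℂ) (n : ℤ) : ℂ := qpi q x / qpi q (x * q ^ n)

noncomputable def gauss (q : ℂ) (n : ℕ) (m : ℤ) : ℂ :=
  if 0 ≤ m ∧ m ≤ (n : ℤ) then qp q q n / (qp q q m.toNat * qp q q (n - m.toNat)) else 0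



section helpers
variable (q : ℂ) (hq : q ≠ 0) (hqp : ∀ k : ℕ, qp q q k ≠ 0)

lemma qp_succ (k : ℕ) : qp q q (k+1) = qp q q k * (1 - q ^ k * q) :=
  Finset.prod_range_succ _ _

include hqp in
lemma one_sub_ne (k : ℕ) : (1 - q ^ k * q) ≠ 0 := by
  intro h
  have := qp_succ q k
  rw [h, mul_zero] at this
  exact hqp (k+1) this

lemma gauss_zero_of (n : ℕ) (m : ℤ) (h : ¬ (0 ≤ m ∧ m ≤ (n:ℤ))) : gauss q n m = 0 := by
  simp [gauss, h]

include hqp in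
lemma gauss_zero_right (n : ℕ) : gauss q n 0 = 1 := by
  have h : (0:ℤ) ≤ 0 ∧ (0:ℤ) ≤ (n:ℤ) := ⟨le_refl _, by positivity⟩
  simp only [gauss, if_pos h, Int.toNat_zero, Nat.sub_zero]
  rw [show qp q q 0 = 1 from Finset.prod_range_zero _, one_mul,
    div_self (hqp n)]

include hqp in
lemma gauss_self (n : ℕ) : gauss q n (n:ℤ) = 1 := by
  have h : (0:ℤ) ≤ (n:ℤ) ∧ (n:ℤ) ≤ (n:ℤ) := ⟨by positivity, le_refl _⟩
  simp only [gauss, if_pos h, Int.toNat_natCast, Nat.sub_self]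
  rw [show qp q q 0 = 1 from Finset.prod_range_zero _, mul_one,
    div_self (hqp n)]

include hqp in
lemma gauss_r1 (n : ℕ) (hn : 1 ≤ n) (m : ℤ) :
    gauss q n m = gauss q (n-1) m + q ^ ((n:ℤ) - m) * gauss q (n-1) (m-1) := by
  rcases lt_trichotomy m 0 with hm | hm | hm
  · rw [gauss_zero_of q n m (by omega), gauss_zero_of q (n-1) m (by omega),
      gauss_zero_of q (n-1) (m-1) (by omega)]
    ring
  · subst hm
    rw [gauss_zero_right q hqp n, gauss_zero_right q hqp (n-1),
      gauss_zero_of q (n-1) ((0:ℤ)-1) (by omega)]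
    ring
  rcases lt_trichotomy m (n:ℤ) with hmn | hmn | hmn
  · -- interior: 1 ≤ m ≤ n-1
    obtain ⟨a', rfl⟩ : ∃ a' : ℕ, m = (a':ℤ) + 1 := ⟨(m-1).toNat, by omega⟩
    obtain ⟨b', hb⟩ : ∃ b' : ℕ, n = a' + b' + 2 := ⟨n - a' - 2, by omega⟩
    subst hb
    have h1 : (0:ℤ) ≤ (a':ℤ)+1 ∧ (a':ℤ)+1 ≤ ((a'+b'+2 : ℕ):ℤ) := by push_cast; omega
    have h2 : (0:ℤ) ≤ (a':ℤ)+1 ∧ (a':ℤ)+1 ≤ ((a'+b'+2-1 : ℕ):ℤ) := by push_cast; omega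
    have h3 : (0:ℤ) ≤ (a':ℤ)+1-1 ∧ (a':ℤ)+1-1 ≤ ((a'+b'+2-1 : ℕ):ℤ) := by push_cast; omega
    rw [gauss, gauss, gauss, if_pos h1, if_pos h2, if_pos h3]
    have e1 : ((a':ℤ)+1).toNat = a' + 1 := by omega
    have e2 : ((a':ℤ)+1-1).toNat = a' := by omega
    have e3 : a'+b'+2 - 1 = a'+b'+1 := by omega
    rw [e1, e2, e3]
    have e4 : a'+b'+2 - (a'+1) = b'+1 := by omega
    have e5 : a'+b'+1 - (a'+1) = b' := by omega
    have e6 : a'+b'+1 - a' = b'+1 := by omega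
    rw [e4, e5, e6]
    have e7 : q ^ (((a'+b'+2:ℕ):ℤ) - ((a':ℤ)+1)) = q ^ (b'+1) := by
      rw [show ((a'+b'+2:ℕ):ℤ) - ((a':ℤ)+1) = ((b'+1 : ℕ):ℤ) by push_cast; omega,
        zpow_natCast]
    rw [e7, qp_succ q (a'+b'+1), qp_succ q (a'+b'), qp_succ q a', qp_succ q b']
    have hA := hqp (a'+b')
    have hB := hqp a'
    have hC := hqp b'
    have h1 := one_sub_ne q hqp (a'+b'+1)
    have h2 := one_sub_ne q hqp (a'+b')
    have h3 := one_sub_ne q hqp a'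
    have h4 := one_sub_ne q hqp b'
    have h3' : 1 - q * q ^ a' ≠ 0 := by rwa [mul_comm]
    have h4' : 1 - q * q ^ b' ≠ 0 := by rwa [mul_comm]
    field_simp
    ring
  · -- m = n
    rw [hmn, gauss_self q hqp n, gauss_zero_of q (n-1) (n:ℤ) (by omega)]
    have : ((n:ℤ) - n) = 0 := by omega
    rw [this, zpow_zero,
      show (n:ℤ) - 1 = ((n-1 : ℕ):ℤ) by omega, gauss_self q hqp (n-1)]
    ring
  · rw [gauss_zero_of q n m (by omega), gauss_zero_of q (n-1) m (by omega),
      gauss_zero_of q (n-1) (m-1) (by omega)]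
    ring

include hqp in
lemma gauss_r2 (n : ℕ) (hn : 1 ≤ n) (m : ℤ) :
    gauss q n m = q ^ m * gauss q (n-1) m + gauss q (n-1) (m-1) := by
  rcases lt_trichotomy m 0 with hm | hm | hm
  · rw [gauss_zero_of q n m (by omega), gauss_zero_of q (n-1) m (by omega),
      gauss_zero_of q (n-1) (m-1) (by omega)]
    ring
  · subst hm
    rw [gauss_zero_right q hqp n, gauss_zero_right q hqp (n-1),
      gauss_zero_of q (n-1) ((0:ℤ)-1) (by omega)]
    simp
  rcases lt_trichotomy m (n:ℤ) with hmn | hmn | hmn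
  · obtain ⟨a', rfl⟩ : ∃ a' : ℕ, m = (a':ℤ) + 1 := ⟨(m-1).toNat, by omega⟩
    obtain ⟨b', hb⟩ : ∃ b' : ℕ, n = a' + b' + 2 := ⟨n - a' - 2, by omega⟩
    subst hb
    have h1 : (0:ℤ) ≤ (a':ℤ)+1 ∧ (a':ℤ)+1 ≤ ((a'+b'+2 : ℕ):ℤ) := by push_cast; omega
    have h2 : (0:ℤ) ≤ (a':ℤ)+1 ∧ (a':ℤ)+1 ≤ ((a'+b'+2-1 : ℕ):ℤ) := by push_cast; omega
    have h3 : (0:ℤ) ≤ (a':ℤ)+1-1 ∧ (a':ℤ)+1-1 ≤ ((a'+b'+2-1 : ℕ):ℤ) := by push_cast; omega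
    rw [gauss, gauss, gauss, if_pos h1, if_pos h2, if_pos h3]
    have e1 : ((a':ℤ)+1).toNat = a' + 1 := by omega
    have e2 : ((a':ℤ)+1-1).toNat = a' := by omega
    have e3 : a'+b'+2 - 1 = a'+b'+1 := by omega
    rw [e1, e2, e3]
    have e4 : a'+b'+2 - (a'+1) = b'+1 := by omega
    have e5 : a'+b'+1 - (a'+1) = b' := by omega
    have e6 : a'+b'+1 - a' = b'+1 := by omega
    rw [e4, e5, e6]
    have e7 : q ^ ((a':ℤ)+1) = q ^ (a'+1) := by
      rw [show ((a':ℤ)+1) = ((a'+1 : ℕ):ℤ) by push_cast; omega, zpow_natCast]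
    rw [e7, qp_succ q (a'+b'+1), qp_succ q (a'+b'), qp_succ q a', qp_succ q b']
    have hA := hqp (a'+b')
    have hB := hqp a'
    have hC := hqp b'
    have h1 := one_sub_ne q hqp (a'+b'+1)
    have h2 := one_sub_ne q hqp (a'+b')
    have h3 := one_sub_ne q hqp a'
    have h4 := one_sub_ne q hqp b'
    have h3' : 1 - q * q ^ a' ≠ 0 := by rwa [mul_comm]
    have h4' : 1 - q * q ^ b' ≠ 0 := by rwa [mul_comm]
    field_simp
    ring
  · rw [hmn, gauss_self q hqp n, gauss_zero_of q (n-1) (n:ℤ) (by omega),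
      show (n:ℤ) - 1 = ((n-1 : ℕ):ℤ) by omega, gauss_self q hqp (n-1)]
    ring
  · rw [gauss_zero_of q n m (by omega), gauss_zero_of q (n-1) m (by omega),
      gauss_zero_of q (n-1) (m-1) (by omega)]
    ring

end helpers

noncomputable def DD (q : ℂ) (N : ℕ) : ℂ :=
  ∑ j ∈ Finset.range (N+1), q ^ (j^2) * gauss q (N-j) (j:ℤ)

noncomputable def fE (q : ℂ) (M : ℕ) (l : ℤ) : ℂ :=
  (-1:ℂ) ^ l * q ^ (l * (5 * l + 1) / 2) * gauss q M (Int.fdiv ((M:ℤ) - 5 * l) 2)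

noncomputable def ee (q : ℂ) (N : ℕ) : ℂ := ∑ l ∈ Finset.Icc (-(N:ℤ)) (N:ℤ), fE q N l

lemma fdiv_two (a : ℤ) : Int.fdiv a 2 = a / 2 := Int.fdiv_eq_ediv_of_nonneg a (by norm_num)

lemma fE_zero (q : ℂ) (M : ℕ) (l : ℤ) (h : l ∉ Finset.Icc (-(M:ℤ)) (M:ℤ)) :
    fE q M l = 0 := by
  rw [Finset.mem_Icc] at h
  rw [fE, fdiv_two, gauss_zero_of q M _ (by omega), mul_zero]

lemma telesc (g : ℤ → ℂ) (a b : ℤ) (h : a - 1 ≤ b) :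
    ∑ l ∈ Finset.Icc a b, (g l - g (l+1)) = g a - g (b+1) := by
  refine Int.le_induction (motive := fun b _ => ∑ l ∈ Finset.Icc a b, (g l - g (l+1)) = g a - g (b+1)) ?_ ?_ b h
  · show ∑ l ∈ Finset.Icc a (a-1), (g l - g (l+1)) = g a - g (a-1+1)
    rw [show a - 1 + 1 = a by ring, Finset.Icc_eq_empty (by omega), Finset.sum_empty]
    ring
  · intro b hb ih
    show ∑ l ∈ Finset.Icc a (b+1), (g l - g (l+1)) = g a - g (b+1+1)
    have hins : Finset.Icc a (b+1) = insert (b+1) (Finset.Icc a b) := by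
      ext x; simp only [Finset.mem_Icc, Finset.mem_insert]; omega
    rw [hins, Finset.sum_insert (by simp only [Finset.mem_Icc]; omega), ih]
    ring

lemma D_rec (q : ℂ) (hq : q ≠ 0) (hqp : ∀ k : ℕ, qp q q k ≠ 0) (N : ℕ) :
    DD q (N+2) = DD q (N+1) + q^(N+1) * DD q N := by
  have step : ∀ j ∈ Finset.range (N+2),
      q ^ (j^2) * gauss q (N+2-j) (j:ℤ)
        = q ^ (j^2) * gauss q (N+1-j) (j:ℤ)
          + q ^ (j^2) * q ^ (((N:ℤ)+2) - 2*(j:ℤ)) * gauss q (N+1-j) ((j:ℤ)-1) := by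
    intro j hj
    rw [Finset.mem_range] at hj
    have h1 : 1 ≤ N+2-j := by omega
    have hr := gauss_r1 q hqp (N+2-j) h1 (j:ℤ)
    rw [show N+2-j-1 = N+1-j by omega] at hr
    rw [hr, show ((N+2-j : ℕ):ℤ) - (j:ℤ) = ((N:ℤ)+2) - 2*(j:ℤ) by push_cast; omega]
    ring
  have hlast : q ^ ((N+2)^2) * gauss q (N+2-(N+2)) ((N+2 : ℕ):ℤ) = 0 := by
    rw [gauss_zero_of q _ _ (by push_cast; omega), mul_zero]
  rw [DD, Finset.sum_range_succ, hlast, add_zero, Finset.sum_congr rfl step,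
    Finset.sum_add_distrib]
  congr 1
  rw [Finset.sum_range_succ']
  have h0 : q ^ (0^2) * q ^ (((N:ℤ)+2) - 2*((0:ℕ):ℤ)) * gauss q (N+1-0) (((0:ℕ):ℤ)-1) = 0 := by
    rw [gauss_zero_of q _ _ (by omega), mul_zero]
  rw [h0, add_zero, DD, Finset.mul_sum]
  apply Finset.sum_congr rfl
  intro i hi
  rw [Finset.mem_range] at hi
  have h2 : N+1-(i+1) = N-i := by omega
  have h3 : ((i+1 : ℕ):ℤ) - 1 = (i:ℤ) := by push_cast; omega
  rw [h2, h3]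
  have hc : q ^ ((i+1)^2) * q ^ (((N:ℤ)+2) - 2*((i+1:ℕ):ℤ)) = q^(N+1) * q^(i^2) := by
    rw [← zpow_natCast q ((i+1)^2), ← zpow_natCast q (N+1), ← zpow_natCast q (i^2),
      ← zpow_add₀ hq, ← zpow_add₀ hq]
    congr 1
    push_cast
    ring
  rw [hc]
  ring

lemma neg_one_zpow_succ (l : ℤ) : ((-1:ℂ)) ^ (l+1) = -((-1:ℂ))^l := by
  rw [zpow_add₀ (by norm_num : (-1:ℂ) ≠ 0)]; simp

lemma two_dvd_aux (l : ℤ) : 2 ∣ l * (5*l+1) := by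
  obtain ⟨r, hr⟩ := Int.even_mul_succ_self l
  have h : l * (5*l+1) = 2*(2*l*l) + (r + r) := by rw [← hr]; ring
  omega

lemma e_rec (q : ℂ) (hq : q ≠ 0) (hqp : ∀ k : ℕ, qp q q k ≠ 0) (N : ℕ) :
    ee q (N+2) = ee q (N+1) + q^(N+1) * ee q N := by
  set Z : ℤ → ℂ := fun l => if ((N:ℤ)+2 - 5*l) % 2 = 0 then
      (-1:ℂ)^l * q ^ (l*(5*l+1)/2) * q ^ (((N:ℤ)+2-5*l)/2) * gauss q N (((N:ℤ)+2-5*l)/2)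
    else 0 with hZ
  have key : ∀ l : ℤ, fE q (N+2) l
      = fE q (N+1) l + q^((N:ℤ)+1) * fE q N l + (Z l - Z (l+1)) := by
    intro l
    have c2 : ((N+2:ℕ):ℤ) = (N:ℤ)+2 := by push_cast; ring
    have c1 : ((N+1:ℕ):ℤ) = (N:ℤ)+1 := by push_cast; ring
    rcases Int.even_or_odd ((N:ℤ)+2-5*l) with ⟨m, hm⟩ | ⟨m, hm⟩
    · -- even case : N+2-5l = 2m
      have f2 : Int.fdiv (((N+2:ℕ):ℤ) - 5*l) 2 = m := by rw [fdiv_two, c2]; omega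
      have f1 : Int.fdiv (((N+1:ℕ):ℤ) - 5*l) 2 = m - 1 := by rw [fdiv_two, c1]; omega
      have f0 : Int.fdiv (((N:ℕ):ℤ) - 5*l) 2 = m - 1 := by rw [fdiv_two]; omega
      have hZl : Z l = (-1:ℂ)^l * q ^ (l*(5*l+1)/2) * q ^ m * gauss q N m := by
        rw [hZ]
        simp only
        rw [if_pos (by omega), show ((N:ℤ)+2-5*l)/2 = m by omega]
      have hZl1 : Z (l+1) = 0 := by
        rw [hZ]; simp only; rw [if_neg (by omega)]
      rw [fE, fE, fE, f2, f1, f0, hZl, hZl1]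
      have g2 := gauss_r2 q hqp (N+2) (by omega) m
      rw [show N+2-1 = N+1 by omega] at g2
      have g1 := gauss_r1 q hqp (N+1) (by omega) m
      rw [show N+1-1 = N by omega] at g1
      rw [g2, g1]
      have hcoef : q ^ m * q ^ (((N+1:ℕ):ℤ) - m) = q ^ ((N:ℤ)+1) := by
        rw [← zpow_add₀ hq]; congr 1; omega
      rw [← hcoef]
      ring
    · -- odd case : N+2-5l = 2m+1
      have f2 : Int.fdiv (((N+2:ℕ):ℤ) - 5*l) 2 = m := by rw [fdiv_two, c2]; omega
      have f1 : Int.fdiv (((N+1:ℕ):ℤ) - 5*l) 2 = m := by rw [fdiv_two, c1]; omega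
      have f0 : Int.fdiv (((N:ℕ):ℤ) - 5*l) 2 = m - 1 := by rw [fdiv_two]; omega
      have hZl : Z l = 0 := by
        rw [hZ]; simp only; rw [if_neg (by omega)]
      have hZl1 : Z (l+1) = (-1:ℂ)^(l+1) * q ^ ((l+1)*(5*(l+1)+1)/2) * q ^ (m-2)
          * gauss q N (m-2) := by
        rw [hZ]
        simp only
        rw [if_pos (by omega), show ((N:ℤ)+2-5*(l+1))/2 = m-2 by omega]
      rw [fE, fE, fE, f2, f1, f0, hZl, hZl1]
      have g2 := gauss_r1 q hqp (N+2) (by omega) m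
      rw [show N+2-1 = N+1 by omega] at g2
      have g1 := gauss_r2 q hqp (N+1) (by omega) (m-1)
      rw [show N+1-1 = N by omega] at g1
      rw [show m-1-1 = m-2 by ring] at g1
      rw [g2, g1]
      have hcoef : q ^ (((N+2:ℕ):ℤ) - m) * q ^ (m-1) = q ^ ((N:ℤ)+1) := by
        rw [← zpow_add₀ hq]; congr 1; omega
      have hexp : l*(5*l+1)/2 + (((N+2:ℕ):ℤ) - m) = (l+1)*(5*(l+1)+1)/2 + (m-2) := by
        have hr : (l+1)*(5*(l+1)+1) = l*(5*l+1) + 10*l + 6 := by ring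
        have hd := two_dvd_aux l
        rw [hr, c2]
        omega
      have e1 : q ^ (l*(5*l+1)/2) * q ^ (((N+2:ℕ):ℤ) - m)
          = q ^ ((l+1)*(5*(l+1)+1)/2) * q ^ (m-2) := by
        rw [← zpow_add₀ hq, ← zpow_add₀ hq, hexp]
      have hcanc : (-1:ℂ)^l * q ^ (l*(5*l+1)/2) * q ^ (((N+2:ℕ):ℤ) - m)
          = -((-1:ℂ)^(l+1) * q ^ ((l+1)*(5*(l+1)+1)/2) * q ^ (m-2)) := by
        rw [neg_one_zpow_succ]
        linear_combination ((-1:ℂ)^l) * e1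
      calc (-1:ℂ)^l * q ^ (l*(5*l+1)/2) *
            (gauss q (N+1) m + q ^ (((N+2:ℕ):ℤ) - m) *
              (q ^ (m-1) * gauss q N (m-1) + gauss q N (m-2)))
          = (-1:ℂ)^l * q ^ (l*(5*l+1)/2) * gauss q (N+1) m
            + (-1:ℂ)^l * q ^ (l*(5*l+1)/2) * (q ^ (((N+2:ℕ):ℤ) - m) * q ^ (m-1)) * gauss q N (m-1)
            + ((-1:ℂ)^l * q ^ (l*(5*l+1)/2) * q ^ (((N+2:ℕ):ℤ) - m)) * gauss q N (m-2) := by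
            ring
        _ = _ := by
            rw [hcoef, hcanc]
            ring
  have sub1 : Finset.Icc (-((N+1:ℕ):ℤ)) ((N+1:ℕ):ℤ) ⊆ Finset.Icc (-((N+2:ℕ):ℤ)) ((N+2:ℕ):ℤ) := by
    intro x hx
    simp only [Finset.mem_Icc] at *
    push_cast at *
    omega
  have sub0 : Finset.Icc (-((N:ℕ):ℤ)) ((N:ℕ):ℤ) ⊆ Finset.Icc (-((N+2:ℕ):ℤ)) ((N+2:ℕ):ℤ) := by
    intro x hx
    simp only [Finset.mem_Icc] at *
    push_cast at *
    omega
  have he1 : ee q (N+1) = ∑ l ∈ Finset.Icc (-((N+2:ℕ):ℤ)) ((N+2:ℕ):ℤ), fE q (N+1) l := by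
    rw [ee]
    exact Finset.sum_subset sub1 (fun x _ hx => fE_zero q (N+1) x hx)
  have he0 : ee q N = ∑ l ∈ Finset.Icc (-((N+2:ℕ):ℤ)) ((N+2:ℕ):ℤ), fE q N l := by
    rw [ee]
    exact Finset.sum_subset sub0 (fun x _ hx => fE_zero q N x hx)
  have htel : ∑ l ∈ Finset.Icc (-((N+2:ℕ):ℤ)) ((N+2:ℕ):ℤ), (Z l - Z (l+1))
      = Z (-((N+2:ℕ):ℤ)) - Z (((N+2:ℕ):ℤ)+1) := by
    exact telesc Z _ _ (by push_cast; omega)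
  have hZa : Z (-((N+2:ℕ):ℤ)) = 0 := by
    rw [hZ]
    simp only
    rw [if_pos (by push_cast; omega),
      gauss_zero_of q N _ (by push_cast; omega), mul_zero]
  have hZb : Z (((N+2:ℕ):ℤ)+1) = 0 := by
    rw [hZ]
    simp only
    rw [if_neg (by push_cast; omega)]
  have hzpow : q ^ ((N:ℤ)+1) = q ^ (N+1) := by
    rw [show (N:ℤ)+1 = ((N+1:ℕ):ℤ) by push_cast; ring, zpow_natCast]
  rw [ee, Finset.sum_congr rfl (fun l _ => key l), Finset.sum_add_distrib,
    Finset.sum_add_distrib, htel, hZa, hZb, ← Finset.mul_sum, ← he1, ← he0, hzpow]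
  ring

lemma DD0 (q : ℂ) (hqp : ∀ k : ℕ, qp q q k ≠ 0) : DD q 0 = 1 := by
  rw [DD, Finset.sum_range_one]
  norm_num
  exact gauss_zero_right q hqp 0

lemma DD1 (q : ℂ) (hqp : ∀ k : ℕ, qp q q k ≠ 0) : DD q 1 = 1 := by
  rw [DD, Finset.sum_range_succ, Finset.sum_range_one]
  rw [show (1:ℕ) - 1 = 0 by omega, show (1:ℕ) - 0 = 1 by omega]
  rw [gauss_zero_of q 0 ((1:ℕ):ℤ) (by norm_num)]
  norm_num
  exact gauss_zero_right q hqp 1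

lemma ee0 (q : ℂ) (hqp : ∀ k : ℕ, qp q q k ≠ 0) : ee q 0 = 1 := by
  rw [ee]
  norm_num
  rw [fE, fdiv_two]
  norm_num
  exact gauss_zero_right q hqp 0

lemma ee1 (q : ℂ) (hqp : ∀ k : ℕ, qp q q k ≠ 0) : ee q 1 = 1 := by
  rw [ee, show Finset.Icc (-((1:ℕ):ℤ)) ((1:ℕ):ℤ) = {-1, 0, 1} by rfl]
  rw [Finset.sum_insert (by decide), Finset.sum_insert (by decide), Finset.sum_singleton]
  have h1 : fE q 1 (-1) = 0 := by
    rw [fE, fdiv_two, gauss_zero_of q 1 _ (by norm_num), mul_zero]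
  have h2 : fE q 1 0 = 1 := by
    rw [fE, fdiv_two]
    norm_num
    exact gauss_zero_right q hqp 1
  have h3 : fE q 1 1 = 0 := by
    rw [fE, fdiv_two, gauss_zero_of q 1 _ (by norm_num), mul_zero]
  rw [h1, h2, h3]
  ring

lemma main_eq (q : ℂ) (hq : q ≠ 0) (hqp : ∀ k : ℕ, qp q q k ≠ 0) :
    ∀ N, DD q N = ee q N := by
  have key : ∀ N, DD q N = ee q N ∧ DD q (N+1) = ee q (N+1) := by
    intro N
    induction N with
    | zero => exact ⟨by rw [DD0 q hqp, ee0 q hqp], by rw [DD1 q hqp, ee1 q hqp]⟩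
    | succ n ih =>
      refine ⟨ih.2, ?_⟩
      rw [D_rec q hq hqp n, e_rec q hq hqp n, ih.1, ih.2]
  exact fun N => (key N).1

/-- Schur's finite Rogers-Ramanujan identity (Andrews 4.1). -/
theorem schur_finite_RR_first (q : ℂ) (hq : q ≠ 0) (hqp : ∀ k : ℕ, qp q q k ≠ 0) (N : ℕ) :
    ∑' j : ℕ, q ^ (j ^ 2) * gauss q (N - j) (j : ℤ)
      = ∑' l : ℤ, (-1 : ℂ) ^ l * q ^ (l * (5 * l + 1) / 2) *
          gauss q N (Int.fdiv ((N : ℤ) - 5 * l) 2) := by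
  have hL : ∑' j : ℕ, q ^ (j ^ 2) * gauss q (N - j) (j:ℤ) = DD q N := by
    rw [DD]
    apply tsum_eq_sum
    intro j hj
    rw [Finset.mem_range, not_lt] at hj
    rw [show N - j = 0 by omega, gauss_zero_of q 0 (j:ℤ) (by push_cast; omega), mul_zero]
  have hR : (∑' l : ℤ, (-1 : ℂ) ^ l * q ^ (l * (5 * l + 1) / 2) *
      gauss q N (Int.fdiv ((N : ℤ) - 5 * l) 2)) = ee q N := by
    rw [ee]
    exact tsum_eq_sum (fun l hl => fE_zero q N l hl)
  rw [hL, hR]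
  exact main_eq q hq hqp N
end

section
/- For x ≠ 0 with j-values nonzero, the universal mock theta function satisfies g(x,q) = Σ_{n≥0} q^{n(n+1)} / ((x;q)_{n+1} (q/x;q)_{n+1}). -/
open Complex

lemma one_sub_sum_le_prod (f : ℕ → ℝ) (h0 : ∀ i, 0 ≤ f i) (h1 : ∀ i, f i ≤ 1) (n : ℕ) :
    1 - ∑ i ∈ Finset.range n, f i ≤ ∏ i ∈ Finset.range n, (1 - f i) := by
  induction n with
  | zero => simp
  | succ n ih =>
    rw [Finset.prod_range_succ, Finset.sum_range_succ]
    have hs : 0 ≤ ∑ i ∈ Finset.range n, f i := Finset.sum_nonneg fun i _ => h0 i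
    nlinarith [h0 n, h1 n]

lemma qp_lb (q x : ℂ) (hq1 : ‖q‖ < 1) (h : ∀ n, qp q x n ≠ 0) :
    ∃ ε : ℝ, 0 < ε ∧ ∀ n, ε ≤ ‖qp q x n‖ := by
  have hq0 : (0:ℝ) ≤ ‖q‖ := norm_nonneg _
  have hx0 : (0:ℝ) ≤ ‖x‖ := norm_nonneg _
  have hqd : (0:ℝ) < 1 - ‖q‖ := by linarith
  have htt : Filter.Tendsto (fun N : ℕ => ‖q‖ ^ N * ‖x‖ / (1 - ‖q‖))
      Filter.atTop (nhds 0) := by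
    have := ((tendsto_pow_atTop_nhds_zero_of_lt_one hq0 hq1).mul_const
      (‖x‖)).div_const (1 - ‖q‖)
    simpa using this
  obtain ⟨N, hN⟩ := (htt.eventually (gt_mem_nhds (by norm_num : (0:ℝ) < 1/2))).exists
  set r := ‖q‖ with hr
  set a : ℕ → ℝ := fun i => r ^ (N + i) * ‖x‖ with ha
  have ha0 : ∀ i, 0 ≤ a i := fun i => mul_nonneg (pow_nonneg hq0 _) hx0
  have hsum : ∀ m : ℕ, ∑ i ∈ Finset.range m, a i ≤ 1/2 := by
    intro m
    have h1 : ∑ i ∈ Finset.range m, a i = r ^ N * ‖x‖ * ∑ i ∈ Finset.range m, r ^ i := by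
      rw [Finset.mul_sum]; exact Finset.sum_congr rfl fun i _ => by simp only [ha, pow_add]; ring
    have h2 : ∑ i ∈ Finset.range m, r ^ i ≤ 1 / (1 - r) := by
      have := Summable.sum_le_tsum (Finset.range m) (fun i _ => pow_nonneg hq0 i)
        (summable_geometric_of_lt_one hq0 hq1)
      rw [tsum_geometric_of_lt_one hq0 hq1] at this; rwa [one_div]
    calc ∑ i ∈ Finset.range m, a i ≤ r ^ N * ‖x‖ * (1/(1-r)) := by
          rw [h1]; exact mul_le_mul_of_nonneg_left h2 (mul_nonneg (pow_nonneg hq0 _) hx0)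
      _ = r ^ N * ‖x‖ / (1 - r) := by ring
      _ ≤ 1/2 := hN.le
  have ha1 : ∀ i, a i ≤ 1 := by
    intro i
    have := hsum (i+1)
    have h2 : a i ≤ ∑ j ∈ Finset.range (i+1), a j :=
      Finset.single_le_sum (fun j _ => ha0 j) (Finset.self_mem_range_succ i)
    linarith
  have key : ∀ m : ℕ, ‖qp q x N‖ / 2 ≤ ‖qp q x (N + m)‖ := by
    intro m
    have hsplit : qp q x (N + m) = qp q x N * ∏ i ∈ Finset.range m, (1 - q ^ (N + i) * x) :=
      Finset.prod_range_add _ N m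
    rw [hsplit, norm_mul]
    have hstep : ∀ i ∈ Finset.range m, 1 - a i ≤ ‖1 - q ^ (N + i) * x‖ := by
      intro i _
      have := norm_sub_norm_le (1 : ℂ) (q ^ (N + i) * x)
      simpa [ha, hr, norm_mul, norm_pow] using this
    have hp : 1 - ∑ i ∈ Finset.range m, a i ≤ ‖∏ i ∈ Finset.range m, (1 - q ^ (N + i) * x)‖ := by
      calc 1 - ∑ i ∈ Finset.range m, a i ≤ ∏ i ∈ Finset.range m, (1 - a i) :=
            one_sub_sum_le_prod a ha0 ha1 m
        _ ≤ ∏ i ∈ Finset.range m, ‖1 - q ^ (N + i) * x‖ :=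
            Finset.prod_le_prod (fun i _ => by linarith [ha1 i]) hstep
        _ = ‖∏ i ∈ Finset.range m, (1 - q ^ (N + i) * x)‖ := (norm_prod _ _).symm
    have h12 : (1:ℝ)/2 ≤ ‖∏ i ∈ Finset.range m, (1 - q ^ (N + i) * x)‖ := by
      have := hsum m; linarith
    have hQN : 0 ≤ ‖qp q x N‖ := norm_nonneg _
    calc ‖qp q x N‖ / 2 = ‖qp q x N‖ * (1/2) := by ring
      _ ≤ ‖qp q x N‖ * ‖∏ i ∈ Finset.range m, (1 - q ^ (N + i) * x)‖ :=
          mul_le_mul_of_nonneg_left h12 hQN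
  -- minimum over n ≤ N plus the tail bound
  set ε₁ : ℝ := (Finset.range (N + 1)).inf' ⟨0, Finset.mem_range.2 (Nat.succ_pos N)⟩
    (fun n => ‖qp q x n‖) with hε₁
  have hε₁pos : 0 < ε₁ := by
    refine (Finset.lt_inf'_iff _).2 ?_
    intro i _
    exact norm_pos_iff.mpr (h i)
  refine ⟨min ε₁ (‖qp q x N‖ / 2), lt_min hε₁pos (by have := norm_pos_iff.mpr (h N); positivity), ?_⟩
  intro n
  rcases le_or_gt n N with hn | hn
  · exact le_trans (min_le_left _ _)
      (Finset.inf'_le _ (Finset.mem_range.2 (Nat.lt_succ_of_le hn)))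
  · obtain ⟨m, rfl⟩ := Nat.exists_eq_add_of_le hn.le
    exact le_trans (min_le_right _ _) (key m)

lemma tele_aux (A u q x y P Q : ℂ) (hP : P ≠ 0) (hQ : Q ≠ 0)
    (hfP : 1 - u * x ≠ 0) (hfQ : 1 - u * y ≠ 0) (hxy : x * y = q) :
    A / (P * (1 - u * x) * Q) - x * (A * u / (P * (1 - u * x) * (Q * (1 - u * y))))
      = A / (P * Q) - A * u * u * q / (P * (1 - u * x) * (Q * (1 - u * y))) := by
  rw [← hxy]
  field_simp
  ring


/-- Alternative expression for the universal mock theta function g(x,q). -/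
theorem gUniv_alt (q x : ℂ) (hq0 : 0 < ‖q‖) (hq1 : ‖q‖ < 1)
    (hx : x ≠ 0) (hden : ∀ n : ℕ, qp q x n ≠ 0 ∧ qp q (q / x) n ≠ 0) :
    gUniv x q = ∑' n : ℕ, q ^ (n * (n + 1)) / (qp q x (n + 1) * qp q (q / x) (n + 1)) := by
  have hq : q ≠ 0 := by
    intro h; rw [h] at hq0; simp at hq0
  have hqa0 : (0:ℝ) ≤ ‖q‖ := norm_nonneg _
  obtain ⟨ε₁, hε₁, hP⟩ := qp_lb q x hq1 (fun n => (hden n).1)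
  obtain ⟨ε₂, hε₂, hQ⟩ := qp_lb q (q / x) hq1 (fun n => (hden n).2)
  set a : ℕ → ℂ := fun n => q ^ (n ^ 2) / (qp q x (n + 1) * qp q (q / x) n) with hadef
  set b : ℕ → ℂ := fun n => q ^ (n * (n + 1)) / (qp q x (n + 1) * qp q (q / x) (n + 1)) with hbdef
  set c : ℕ → ℂ := fun n => q ^ (n ^ 2) / (qp q x n * qp q (q / x) n) with hcdef
  have hεε : (0:ℝ) < ε₁ * ε₂ := mul_pos hε₁ hε₂
  -- generic absolute value bound
  have habs : ∀ (e : ℕ → ℕ) (d₁ d₂ : ℕ → ℕ), (∀ n, n ≤ e n) →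
      ∀ n : ℕ, ‖q ^ (e n) / (qp q x (d₁ n) * qp q (q / x) (d₂ n))‖
        ≤ (ε₁ * ε₂)⁻¹ * ‖q‖ ^ n := by
    intro e d₁ d₂ he n
    rw [norm_div, norm_mul, norm_pow]
    have hnum : ‖q‖ ^ (e n) ≤ ‖q‖ ^ n :=
      pow_le_pow_of_le_one hqa0 hq1.le (he n)
    have hden2 : ε₁ * ε₂ ≤ ‖qp q x (d₁ n)‖ * ‖qp q (q / x) (d₂ n)‖ :=
      mul_le_mul (hP _) (hQ _) hε₂.le (norm_nonneg _)
    calc ‖q‖ ^ (e n) / (‖qp q x (d₁ n)‖ * ‖qp q (q / x) (d₂ n)‖)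
        ≤ ‖q‖ ^ n / (ε₁ * ε₂) :=
          div_le_div₀ (pow_nonneg hqa0 n) hnum hεε hden2
      _ = (ε₁ * ε₂)⁻¹ * ‖q‖ ^ n := by ring
  have hgeom : Summable (fun n : ℕ => (ε₁ * ε₂)⁻¹ * ‖q‖ ^ n) :=
    (summable_geometric_of_lt_one hqa0 hq1).mul_left _
  have ha : Summable a := by
    apply Summable.of_norm_bounded hgeom
    intro n
    simpa [hadef] using
      habs (fun n => n ^ 2) (fun n => n + 1) (fun n => n)
        (fun n => Nat.le_self_pow two_ne_zero n) n
  have hb : Summable b := by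
    apply Summable.of_norm_bounded hgeom
    intro n
    simpa [hbdef] using
      habs (fun n => n * (n + 1)) (fun n => n + 1) (fun n => n + 1)
        (fun n => Nat.le_mul_of_pos_right n (Nat.succ_pos n)) n
  -- telescoping identity
  have tele : ∀ n : ℕ, a n - x * b n = c n - c (n + 1) := by
    intro n
    have hP1 : qp q x (n + 1) = qp q x n * (1 - q ^ n * x) := Finset.prod_range_succ _ n
    have hQ1 : qp q (q / x) (n + 1) = qp q (q / x) n * (1 - q ^ n * (q / x)) :=
      Finset.prod_range_succ _ n
    have hPn : qp q x n ≠ 0 := (hden n).1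
    have hQn : qp q (q / x) n ≠ 0 := (hden n).2
    have hfP : (1 - q ^ n * x) ≠ 0 := by
      intro h0
      exact (hden (n + 1)).1 (by rw [hP1, h0, mul_zero])
    have hfQ : (1 - q ^ n * (q / x)) ≠ 0 := by
      intro h0
      exact (hden (n + 1)).2 (by rw [hQ1, h0, mul_zero])
    have e1 : q ^ ((n + 1) ^ 2) = q ^ (n ^ 2) * q ^ n * q ^ n * q := by
      rw [show (n + 1) ^ 2 = n ^ 2 + n + n + 1 from by ring, pow_add, pow_add, pow_add, pow_one]
    have e2 : q ^ (n * (n + 1)) = q ^ (n ^ 2) * q ^ n := by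
      rw [show n * (n + 1) = n ^ 2 + n from by ring, pow_add]
    simp only [hadef, hbdef, hcdef]
    rw [hP1, hQ1, e1, e2]
    exact tele_aux (q ^ (n ^ 2)) (q ^ n) q x (q / x) (qp q x n) (qp q (q / x) n)
      hPn hQn hfP hfQ (by field_simp)
  have hc0 : c 0 = 1 := by simp [hcdef, qp]
  have hctend : Filter.Tendsto c Filter.atTop (nhds 0) := by
    apply squeeze_zero_norm (a := fun n => (ε₁ * ε₂)⁻¹ * ‖q‖ ^ n)
    · intro n
      simpa [hcdef] using
        habs (fun n => n ^ 2) (fun n => n) (fun n => n)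
          (fun n => Nat.le_self_pow two_ne_zero n) n
    · simpa using (tendsto_pow_atTop_nhds_zero_of_lt_one hqa0 hq1).const_mul ((ε₁ * ε₂)⁻¹)
  have hS : Summable (fun n => a n - x * b n) := ha.sub (hb.mul_left x)
  have hsum1 : HasSum (fun n => a n - x * b n) 1 := by
    rw [hS.hasSum_iff_tendsto_nat]
    have hps : ∀ n : ℕ, ∑ i ∈ Finset.range n, (a i - x * b i) = 1 - c n := by
      intro n
      calc ∑ i ∈ Finset.range n, (a i - x * b i)
          = ∑ i ∈ Finset.range n, (c i - c (i + 1)) := Finset.sum_congr rfl fun i _ => tele i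
        _ = c 0 - c n := Finset.sum_range_sub' c n
        _ = 1 - c n := by rw [hc0]
    simp only [hps]
    simpa using tendsto_const_nhds.sub hctend
  have key : (∑' n, a n) - x * (∑' n, b n) = 1 :=
    (ha.hasSum.sub ((hb.hasSum).mul_left x)).unique hsum1
  have hA : (∑' n, a n) = 1 + x * (∑' n, b n) := by linear_combination key
  rw [gUniv, hA]
  field_simp
  ring
end
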